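/- Let φ = c1 ∧ ⋯ ∧ cn be a 3-CNF formula over atoms of Σ, A, B atoms not occurring in φ, Q = {A ← L̃_{i,1} ∧ L̃_{i,2} ∧ L̃_{i,3} : 1 ≤ i ≤ n} (where L̃ = L for an atom literal L and L̃ = not C for L = ¬C), P1 = Q ∪ {A × B ←}, and P2 = Q ∪ {A × B ←} ∪ {A ←}. If J is a two-valued assignment satisfying φ, then the four-valued interpretation I with I(A) = F*, I(B) = T, I(C) = F for every variable C of φ with J(C) = T, and I(C) = T for every variable C of φ with J(C) = F, is a model of P1 but not a model of P2. -/
import Mathlib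


/-- The four truth values F < F* < T* < T. -/
inductive V where
  | F | Fs | Ts | T
  deriving DecidableEq, Repr

def V.toNat : V → ℕ
  | .F => 0
  | .Fs => 1
  | .Ts => 2
  | .T => 3

instance : LinearOrder V :=
  LinearOrder.lift' V.toNat (by intro a b; cases a <;> cases b <;> simp [V.toNat])

/-- An LPOD rule `hd × hds(1) × ⋯ × hds(k) ← pos(1) ∧ ⋯ ∧ not neg(1) ∧ ⋯`. -/
structure Rule where
  hd : ℕ
  hds : List ℕ
  pos : List ℕ
  neg : List ℕ
  deriving DecidableEq, Repr

/-- Value of an ordered disjunction `c × cs(1) × ⋯ × cs(k)` of atoms. -/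
def evalHead (I : ℕ → V) : ℕ → List ℕ → V
  | c, [] => I c
  | c, c' :: cs => if I c = V.Fs then evalHead I c' cs else I c

/-- Value of `not φ` given the value of `φ`. -/
def evalNot (v : V) : V := if v ≤ V.Fs then V.T else V.F

/-- Value of the body of a rule (the empty body evaluates to `T`). -/
def evalBody (I : ℕ → V) (r : Rule) : V :=
  ((r.pos.map I) ++ (r.neg.map (fun b => evalNot (I b)))).foldr min V.T

/-- A rule evaluates to `T` under `I` (i.e. `I(head) ≥ I(body)`). -/
def Rule.sat (I : ℕ → V) (r : Rule) : Prop :=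
  evalBody I r ≤ evalHead I r.hd r.hds

/-- An LPOD: a finite set of rules. -/
abbrev Program := Finset Rule

def isModel (I : ℕ → V) (P : Program) : Prop := ∀ r ∈ P, r.sat I

/-- Logical equivalence in the four-valued logic: same models. -/
def logEquiv (P1 P2 : Program) : Prop := ∀ I : ℕ → V, isModel I P1 ↔ isModel I P2

def Rule.atoms (r : Rule) : Finset ℕ :=
  {r.hd} ∪ r.hds.toFinset ∪ r.pos.toFinset ∪ r.neg.toFinset

/-- The atoms occurring in a program. -/
def progAtoms (P : Program) : Finset ℕ := P.biUnion Rule.atoms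

/-- The ordering `⪯` on truth values: reflexive closure of
    `F ≺ F*`, `F ≺ T*`, `F ≺ T`, `T* ≺ T`. -/
def V.pre (v1 v2 : V) : Prop :=
  v1 = v2 ∨ (v1 = V.F ∧ v2 ≠ V.F) ∨ (v1 = V.Ts ∧ v2 = V.T)

/-- `I1 ⪯ I2` relative to the atoms of `P`. -/
def interpLe (P : Program) (I1 I2 : ℕ → V) : Prop :=
  ∀ A ∈ progAtoms P, V.pre (I1 A) (I2 A)

/-- `I` is solid for `P`: no atom of `P` gets the value `T*`. -/
def solid (P : Program) (I : ℕ → V) : Prop :=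
  ∀ A ∈ progAtoms P, I A ≠ V.Ts

/-- An answer set of `P`: a `⪯`-minimal model of `P` that is solid. -/
def answerSet (P : Program) (M : ℕ → V) : Prop :=
  isModel M P ∧ solid P M ∧
    ∀ N : ℕ → V, isModel N P → interpLe P N M → interpLe P M N

/-- The atoms of `P` receiving the value `F*` under `M`. -/
def fstars (P : Program) (M : ℕ → V) : Finset ℕ :=
  (progAtoms P).filter (fun A => M A = V.Fs)

/-- A most-preferred answer set: `⊏`-minimal among the answer sets. -/
def mostPreferred (P : Program) (M : ℕ → V) : Prop :=
  answerSet P M ∧ ∀ N : ℕ → V, answerSet P N → ¬ fstars P N ⊂ fstars P M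

/-- Strong equivalence under the most-preferred answer sets. -/
def seMost (P1 P2 : Program) : Prop :=
  ∀ P : Program, ∀ M : ℕ → V, mostPreferred (P1 ∪ P) M ↔ mostPreferred (P2 ∪ P) M

/-- Strong equivalence under all the answer sets. -/
def seAll (P1 P2 : Program) : Prop :=
  ∀ P : Program, ∀ M : ℕ → V, answerSet (P1 ∪ P) M ↔ answerSet (P2 ∪ P) M

/-- A normal logic program: every rule has a single atom as head. -/
def normalProg (P : Program) : Prop := ∀ r ∈ P, r.hds = []

/-- `X` is closed under the rules of the Gelfond–Lifschitz reduct `P^S`. -/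
def reductClosed (P : Program) (S X : Set ℕ) : Prop :=
  ∀ r ∈ P, (∀ b ∈ r.neg, b ∉ S) → (∀ a ∈ r.pos, a ∈ X) → r.hd ∈ X

/-- `S` is a stable model (standard answer set): the least Herbrand model of `P^S`. -/
def stableModel (P : Program) (S : Set ℕ) : Prop :=
  reductClosed P S S ∧ ∀ X : Set ℕ, reductClosed P S X → S ⊆ X

/-- `I` is three-valued for `P`: no atom of `P` gets the value `F*`. -/
def threeValued (P : Program) (I : ℕ → V) : Prop :=
  ∀ A ∈ progAtoms P, I A ≠ V.Fs

/-- A propositional literal: an atom together with its sign (`true` = positive). -/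
abbrev Lit := ℕ × Bool

/-- A 3-clause `L₁ ∨ L₂ ∨ L₃`. -/
abbrev Clause := Lit × Lit × Lit

def Clause.lits (c : Clause) : List Lit := [c.1, c.2.1, c.2.2]

/-- The rule `A ← L̃₁ ∧ L̃₂ ∧ L̃₃` corresponding to a clause. -/
def clauseRule (A : ℕ) (c : Clause) : Rule :=
  ⟨A, [],
    (c.lits.filter (fun l => l.2)).map Prod.fst,
    (c.lits.filter (fun l => !l.2)).map Prod.fst⟩

/-- The atoms occurring in a 3-CNF formula. -/
def cnfAtoms (φ : List Clause) : Finset ℕ :=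
  φ.toFinset.biUnion (fun c => (c.lits.map Prod.fst).toFinset)

/-- A two-valued assignment `J` satisfies a CNF formula. -/
def cnfSat (J : ℕ → Bool) (φ : List Clause) : Prop :=
  ∀ c ∈ φ, ∃ l ∈ c.lits, J l.1 = l.2

/-- The program `Q = {A ← L̃ᵢ₁ ∧ L̃ᵢ₂ ∧ L̃ᵢ₃ : 1 ≤ i ≤ n}`. -/
def Qprog (A : ℕ) (φ : List Clause) : Program :=
  φ.toFinset.image (clauseRule A)

/-- `P1 = Q ∪ {A × B ←}`. -/
def P1prog (A B : ℕ) (φ : List Clause) : Program :=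
  Qprog A φ ∪ {Rule.mk A [B] [] []}

/-- `P2 = Q ∪ {A × B ←} ∪ {A ←}`. -/
def P2prog (A B : ℕ) (φ : List Clause) : Program :=
  Qprog A φ ∪ {Rule.mk A [B] [] []} ∪ {Rule.mk A [] [] []}

theorem foldr_min_le (l : List V) (a : V) (h : a ∈ l) : l.foldr min V.T ≤ a := by
  induction l with
  | nil => cases h
  | cons b t ih =>
    rcases List.mem_cons.mp h with rfl | ht
    · exact min_le_left _ _
    · exact le_trans (min_le_right _ _) (ih ht)

/-- from a satisfying assignment `J` of `φ`, the described
four-valued interpretation is a model of `P1` but not of `P2`. -/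
theorem sat_gives_separating_model (φ : List Clause) (A B : ℕ)
    (hA : A ∉ cnfAtoms φ) (hB : B ∉ cnfAtoms φ) (hAB : A ≠ B)
    (J : ℕ → Bool) (hJ : cnfSat J φ)
    (I : ℕ → V) (hIA : I A = V.Fs) (hIB : I B = V.T)
    (hIC : ∀ C ∈ cnfAtoms φ, I C = if J C then V.F else V.T) :
    isModel I (P1prog A B φ) ∧ ¬ isModel I (P2prog A B φ) := by
  constructor
  · intro r hr
    rcases Finset.mem_union.mp hr with hq | hs
    · rcases Finset.mem_image.mp hq with ⟨c, hc, rfl⟩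
      have hc' : c ∈ φ := List.mem_toFinset.mp hc
      obtain ⟨l, hl, hJl⟩ := hJ c hc'
      have hatom : l.1 ∈ cnfAtoms φ :=
        Finset.mem_biUnion.mpr ⟨c, hc,
          List.mem_toFinset.mpr (List.mem_map.mpr ⟨l, hl, rfl⟩)⟩
      have hIl := hIC l.1 hatom
      have hbody : V.F ∈ ((clauseRule A c).pos.map I) ++
          ((clauseRule A c).neg.map (fun b => evalNot (I b))) := by
        cases hb : l.2
        · apply List.mem_append_right
          have hv : evalNot (I l.1) = V.F := by
            rw [hIl, hJl, hb]; rfl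
          rw [← hv]
          exact List.mem_map.mpr ⟨l.1,
            List.mem_map.mpr ⟨l, List.mem_filter.mpr ⟨hl, by simp [hb]⟩, rfl⟩, rfl⟩
        · apply List.mem_append_left
          have hv : I l.1 = V.F := by
            rw [hIl, hJl, hb]; rfl
          rw [← hv]
          exact List.mem_map.mpr ⟨l.1,
            List.mem_map.mpr ⟨l, List.mem_filter.mpr ⟨hl, by simp [hb]⟩, rfl⟩, rfl⟩
      have hmin : evalBody I (clauseRule A c) ≤ V.F :=
        le_trans (foldr_min_le _ _ hbody) le_rfl
      unfold Rule.sat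
      simp [clauseRule, evalHead, hIA]
      calc evalBody I (clauseRule A c) ≤ V.F := hmin
        _ ≤ V.Fs := by decide
    · rw [Finset.mem_singleton.mp hs]
      unfold Rule.sat
      simp [evalBody, evalHead, hIA, hIB]
  · intro h
    have hr : (Rule.mk A [] [] []) ∈ P2prog A B φ := by
      unfold P2prog
      exact Finset.mem_union_right _ (Finset.mem_singleton_self _)
    have := h _ hr
    unfold Rule.sat evalBody evalHead at this
    simp [hIA] at this
    exact absurd this (by decide)
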